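/- arXiv:1910.03859 — 2 statements merged into one kernel-verified Lean document; each statement's English description precedes it below -/
import Mathlib

section
/- Let k be a field and λ ∈ k with λ ≠ 0 and λ ≠ 1. The k-algebra homomorphism φ : k[x,y] → k[t] × k[t] × k[t] determined by φ(x) = (0, t², λt²) and φ(y) = (t, t, t) has kernel exactly the principal ideal generated by F = x(x−y²)(x−λy²). Consequently the ring R = k[x,y]/(F) (the coordinate ring of the plane curve singularity of type T₃₆) embeds into k[t] × k[t] × k[t] via x ↦ (0, t², λt²), y ↦ (t, t, t). -/
open MvPolynomial

noncomputable section

/-- `x = X 0` and `y = X 1` in `k[x,y]`. -/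
def T36.F {k : Type} [Field k] (lam : k) : MvPolynomial (Fin 2) k :=
  X 0 * (X 0 - X 1 ^ 2) * (X 0 - C lam * X 1 ^ 2)

/-- The `k`-algebra homomorphism `k[x,y] → k[t] × k[t] × k[t]` with
`x ↦ (0, t², λ t²)` and `y ↦ (t, t, t)`. -/
def T36.phi {k : Type} [Field k] (lam : k) :
    MvPolynomial (Fin 2) k →ₐ[k] Polynomial k × Polynomial k × Polynomial k :=
  aeval (fun i : Fin 2 =>
    if i = 0 then ((0, Polynomial.X ^ 2, Polynomial.C lam * Polynomial.X ^ 2) :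
        Polynomial k × Polynomial k × Polynomial k)
    else ((Polynomial.X, Polynomial.X, Polynomial.X) :
        Polynomial k × Polynomial k × Polynomial k))

/-- Identify `k[x,y]` with `(k[t])[X]` (`y ↦ t`, `x ↦ X`). -/
def T36.E (k : Type) [Field k] : MvPolynomial (Fin 2) k ≃ₐ[k] Polynomial (Polynomial k) :=
  (MvPolynomial.finSuccEquiv k 1).trans <| Polynomial.mapAlgEquiv <|
    (MvPolynomial.finSuccEquiv k 0).trans <| Polynomial.mapAlgEquiv <|
      MvPolynomial.isEmptyAlgEquiv k (Fin 0)

lemma T36.E_X0 (k : Type) [Field k] : T36.E k (X 0) = Polynomial.X := by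
  simp only [T36.E, AlgEquiv.trans_apply, finSuccEquiv_X_zero, Polynomial.coe_mapAlgEquiv,
    Polynomial.map_X]

lemma T36.E_X1 (k : Type) [Field k] : T36.E k (X 1) = Polynomial.C Polynomial.X := by
  have h1 : (1 : Fin 2) = Fin.succ 0 := rfl
  simp only [T36.E, AlgEquiv.trans_apply, h1, finSuccEquiv_X_succ, Polynomial.coe_mapAlgEquiv,
    Polynomial.map_C, RingHom.coe_coe, finSuccEquiv_X_zero, Polynomial.map_X]

/-- Evaluation `(k[t])[X] → k[t]` at `c`, as a `k`-algebra hom. -/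
def T36.ev {k : Type} [Field k] (c : Polynomial k) :
    Polynomial (Polynomial k) →ₐ[k] Polynomial k :=
  (Polynomial.aeval c).restrictScalars k

lemma T36.ev_apply {k : Type} [Field k] (c : Polynomial k) (q : Polynomial (Polynomial k)) :
    T36.ev c q = Polynomial.eval c q := by
  simp [T36.ev, Polynomial.aeval_def]

lemma T36.phi_eq {k : Type} [Field k] (lam : k) :
    T36.phi lam = ((T36.ev 0).prod ((T36.ev (Polynomial.X ^ 2)).prod
      (T36.ev (Polynomial.C lam * Polynomial.X ^ 2)))).comp (T36.E k).toAlgHom := by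
  symm
  apply MvPolynomial.algHom_ext
  intro i
  fin_cases i <;>
    simp [T36.phi, T36.ev, T36.E_X0, T36.E_X1, Prod.ext_iff]

lemma T36.E_F {k : Type} [Field k] (lam : k) :
    T36.E k (T36.F lam) =
      Polynomial.X * (Polynomial.X - Polynomial.C (Polynomial.X ^ 2)) *
        (Polynomial.X - Polynomial.C (Polynomial.C lam * Polynomial.X ^ 2)) := by
  have hC : T36.E k (C lam) = Polynomial.C (Polynomial.C lam) := by
    have := (T36.E k).commutes lam
    simpa [MvPolynomial.algebraMap_eq, Polynomial.algebraMap_apply] using this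
  simp only [T36.F, map_mul, map_sub, map_pow, T36.E_X0, T36.E_X1, hC]

lemma three_roots {A : Type} [CommRing A] [IsDomain A] {p : Polynomial A} {a b c : A}
    (hab : a ≠ b) (hac : a ≠ c) (hbc : b ≠ c)
    (ha : p.eval a = 0) (hb : p.eval b = 0) (hc : p.eval c = 0) :
    (Polynomial.X - Polynomial.C a) * (Polynomial.X - Polynomial.C b) *
      (Polynomial.X - Polynomial.C c) ∣ p := by
  obtain ⟨q, rfl⟩ := Polynomial.dvd_iff_isRoot.mpr ha
  have hb' : (b - a) * q.eval b = 0 := by simpa using hb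
  have hqb : q.eval b = 0 := by
    rcases mul_eq_zero.mp hb' with h | h
    · exact absurd (sub_eq_zero.mp h).symm hab
    · exact h
  obtain ⟨r, rfl⟩ := Polynomial.dvd_iff_isRoot.mpr hqb
  have hc' : (c - a) * ((c - b) * r.eval c) = 0 := by simpa using hc
  have hrc : r.eval c = 0 := by
    rcases mul_eq_zero.mp hc' with h | h
    · exact absurd (sub_eq_zero.mp h).symm hac
    rcases mul_eq_zero.mp h with h' | h'
    · exact absurd (sub_eq_zero.mp h').symm hbc
    · exact h'
  obtain ⟨s, rfl⟩ := Polynomial.dvd_iff_isRoot.mpr hrc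
  exact ⟨s, by ring⟩

theorem T36_kernel_of_normalization (k : Type) [Field k] (lam : k)
    (h0 : lam ≠ 0) (h1 : lam ≠ 1) :
    RingHom.ker (T36.phi lam : MvPolynomial (Fin 2) k →ₐ[k]
        Polynomial k × Polynomial k × Polynomial k) = Ideal.span {T36.F lam} ∧
    ∃ ψ : (MvPolynomial (Fin 2) k ⧸ Ideal.span {T36.F lam}) →ₐ[k]
        Polynomial k × Polynomial k × Polynomial k,
      Function.Injective ψ ∧
      ψ.comp (Ideal.Quotient.mkₐ k (Ideal.span {T36.F lam})) = T36.phi lam := by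
  have hphi : ∀ p : MvPolynomial (Fin 2) k, T36.phi lam p =
      (Polynomial.eval 0 (T36.E k p), Polynomial.eval (Polynomial.X ^ 2) (T36.E k p),
       Polynomial.eval (Polynomial.C lam * Polynomial.X ^ 2) (T36.E k p)) := by
    intro p
    rw [T36.phi_eq lam]
    simp [T36.ev_apply]
  have d01 : (0 : Polynomial k) ≠ Polynomial.X ^ 2 := by
    intro h
    have := congrArg (fun q => Polynomial.coeff q 2) h
    simp at this
  have d02 : (0 : Polynomial k) ≠ Polynomial.C lam * Polynomial.X ^ 2 := by
    intro h
    have := congrArg (fun q => Polynomial.coeff q 2) h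
    simp [Polynomial.coeff_C_mul] at this
    exact h0 this.symm
  have d12 : (Polynomial.X ^ 2 : Polynomial k) ≠ Polynomial.C lam * Polynomial.X ^ 2 := by
    intro h
    have := congrArg (fun q => Polynomial.coeff q 2) h
    simp [Polynomial.coeff_C_mul] at this
    exact h1 this.symm
  -- φ(F) = 0
  have hphiF : T36.phi lam (T36.F lam) = 0 := by
    rw [hphi, T36.E_F]
    simp [Prod.ext_iff]
  -- kernel identification
  have hker : RingHom.ker (T36.phi lam : MvPolynomial (Fin 2) k →ₐ[k]
      Polynomial k × Polynomial k × Polynomial k) = Ideal.span {T36.F lam} := by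
    ext p
    rw [RingHom.mem_ker, Ideal.mem_span_singleton]
    constructor
    · intro hp
      rw [hphi p] at hp
      have h0' : Polynomial.eval 0 (T36.E k p) = 0 := congrArg Prod.fst hp
      have h1' : Polynomial.eval (Polynomial.X ^ 2) (T36.E k p) = 0 :=
        congrArg (fun z => z.2.1) hp
      have h2' : Polynomial.eval (Polynomial.C lam * Polynomial.X ^ 2) (T36.E k p) = 0 :=
        congrArg (fun z => z.2.2) hp
      have hdvd := three_roots d01 d02 d12 h0' h1' h2'
      rw [Polynomial.C_0, sub_zero] at hdvd
      obtain ⟨q, hq⟩ := hdvd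
      refine ⟨(T36.E k).symm q, (T36.E k).injective ?_⟩
      rw [map_mul, AlgEquiv.apply_symm_apply, T36.E_F, hq]
    · rintro ⟨q, rfl⟩
      rw [map_mul, hphiF, zero_mul]
  refine ⟨hker, Ideal.Quotient.liftₐ _ (T36.phi lam)
    (fun a ha => by rw [← hker] at ha; exact ha), ?_, Ideal.Quotient.liftₐ_comp _ _ _⟩
  intro a b hab
  obtain ⟨a', rfl⟩ := Ideal.Quotient.mkₐ_surjective k _ a
  obtain ⟨b', rfl⟩ := Ideal.Quotient.mkₐ_surjective k _ b
  simp only [Ideal.Quotient.liftₐ_apply, Ideal.Quotient.mkₐ_eq_mk,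
    Ideal.Quotient.lift_mk] at hab
  simp only [Ideal.Quotient.mkₐ_eq_mk]
  rw [Ideal.Quotient.eq, ← hker, RingHom.mem_ker]
  simpa [map_sub, sub_eq_zero] using (show T36.phi lam a' = T36.phi lam b' from hab)
end
end

section
/- Let k be a field and λ ∈ k with λ ≠ 0 and λ ≠ 1. Then there is an isomorphism of k-algebras k[x,y]/(x(x−y²), x−λy²) ≅ k[y]/(y⁴); in particular, the quotient k[x,y]/(x(x−y²), x−λy²) has dimension 4 as a k-vector space. (This computes Ext¹_R(R₃, R₁₂) ≅ R₁₂/(x−λy²)R₁₂ for the T₃₆ singularity, confirming the basis 1₁₂, t₁₂, t₁², t₁³ listed in the paper's table.) -/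
open MvPolynomial

noncomputable section

theorem T36_ext_computation (k : Type) [Field k] (lam : k) (h0 : lam ≠ 0) (h1 : lam ≠ 1) :
    Nonempty ((MvPolynomial (Fin 2) k ⧸
        (Ideal.span {X 0 * (X 0 - X 1 ^ 2), X 0 - C lam * X 1 ^ 2} :
          Ideal (MvPolynomial (Fin 2) k))) ≃ₐ[k]
      (Polynomial k ⧸ (Ideal.span {(Polynomial.X : Polynomial k) ^ 4} :
          Ideal (Polynomial k)))) ∧
    Module.finrank k (MvPolynomial (Fin 2) k ⧸
        (Ideal.span {X 0 * (X 0 - X 1 ^ 2), X 0 - C lam * X 1 ^ 2} :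
          Ideal (MvPolynomial (Fin 2) k))) = 4 := by
  set I : Ideal (MvPolynomial (Fin 2) k) :=
    Ideal.span {X 0 * (X 0 - X 1 ^ 2), X 0 - C lam * X 1 ^ 2} with hI
  set J : Ideal (Polynomial k) := Ideal.span {(Polynomial.X : Polynomial k) ^ 4} with hJ
  have hlam : lam * (lam - 1) ≠ 0 := mul_ne_zero h0 (sub_ne_zero.mpr h1)
  -- forward hom
  have hg2 : (X 0 - C lam * X 1 ^ 2 : MvPolynomial (Fin 2) k) ∈ I := by
    apply Ideal.subset_span; simp
  have hy4 : (X 1 ^ 4 : MvPolynomial (Fin 2) k) ∈ I := by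
    rw [hI, Ideal.mem_span_pair]
    refine ⟨C (lam * (lam - 1))⁻¹, - C (lam * (lam - 1))⁻¹ * (X 0 + (C lam - 1) * X 1 ^ 2), ?_⟩
    have : (C (lam * (lam - 1))⁻¹ : MvPolynomial (Fin 2) k) * C (lam * (lam - 1)) = 1 := by
      rw [← C_mul, inv_mul_cancel₀ hlam, C_1]
    rw [C_mul, C_sub, C_1] at this
    linear_combination (X 1 ^ 4 : MvPolynomial (Fin 2) k) * this
  -- forward map
  let ψ0 : MvPolynomial (Fin 2) k →ₐ[k] Polynomial k :=
    aeval ![Polynomial.C lam * Polynomial.X ^ 2, Polynomial.X]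
  have hψ0X0 : ψ0 (X 0) = Polynomial.C lam * Polynomial.X ^ 2 := by simp [ψ0]
  have hψ0X1 : ψ0 (X 1) = Polynomial.X := by simp [ψ0]
  let f0 : MvPolynomial (Fin 2) k →ₐ[k] (Polynomial k ⧸ J) :=
    (Ideal.Quotient.mkₐ k J).comp ψ0
  have hker : ∀ a ∈ I, f0 a = 0 := by
    have hle : I ≤ RingHom.ker f0.toRingHom := by
      rw [hI, Ideal.span_le]
      rintro a (rfl | rfl)
      all_goals
        show Ideal.Quotient.mk J (ψ0 _) = 0
        rw [Ideal.Quotient.eq_zero_iff_mem, hJ, Ideal.mem_span_singleton]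
      · rw [map_mul, map_sub, map_pow, hψ0X0, hψ0X1]
        exact ⟨Polynomial.C lam * (Polynomial.C lam - 1), by ring⟩
      · rw [map_sub, map_mul, map_pow, hψ0X0, hψ0X1, algHom_C, Polynomial.algebraMap_eq]
        exact ⟨0, by ring⟩
    exact fun a ha => hle ha
  let ψ : (MvPolynomial (Fin 2) k ⧸ I) →ₐ[k] (Polynomial k ⧸ J) :=
    Ideal.Quotient.liftₐ I f0 hker
  -- backward map
  let χ0 : Polynomial k →ₐ[k] (MvPolynomial (Fin 2) k ⧸ I) :=
    Polynomial.aeval (Ideal.Quotient.mk I (X 1))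
  have hkerχ : ∀ a ∈ J, χ0 a = 0 := by
    have : J ≤ RingHom.ker χ0.toRingHom := by
      rw [hJ, Ideal.span_le]
      rintro a (rfl : a = _)
      show χ0 (Polynomial.X ^ 4) = 0
      simp only [map_pow, Polynomial.aeval_X, χ0]
      rw [← map_pow, Ideal.Quotient.eq_zero_iff_mem]
      exact hy4
    exact fun a ha => this ha
  let χ : (Polynomial k ⧸ J) →ₐ[k] (MvPolynomial (Fin 2) k ⧸ I) :=
    Ideal.Quotient.liftₐ J χ0 hkerχ
  -- compositions
  have hψχ : ψ.comp χ = AlgHom.id k (Polynomial k ⧸ J) := by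
    apply Ideal.Quotient.algHom_ext
    apply Polynomial.algHom_ext
    show ψ (χ (Ideal.Quotient.mk J Polynomial.X)) = Ideal.Quotient.mk J Polynomial.X
    have h1 : χ (Ideal.Quotient.mk J Polynomial.X) = Ideal.Quotient.mk I (X 1) := by
      show χ0 Polynomial.X = _
      simp [χ0]
    rw [h1]
    show Ideal.Quotient.mk J (ψ0 (X 1)) = _
    rw [hψ0X1]
  have hχψ : χ.comp ψ = AlgHom.id k (MvPolynomial (Fin 2) k ⧸ I) := by
    apply Ideal.Quotient.algHom_ext
    apply MvPolynomial.algHom_ext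
    intro i
    fin_cases i
    · show χ (Ideal.Quotient.mk J (ψ0 (X 0))) = Ideal.Quotient.mk I (X 0)
      rw [hψ0X0]
      show χ0 (Polynomial.C lam * Polynomial.X ^ 2) = _
      rw [map_mul, map_pow, Polynomial.aeval_X, Polynomial.aeval_C]
      rw [IsScalarTower.algebraMap_apply k (MvPolynomial (Fin 2) k)
        (MvPolynomial (Fin 2) k ⧸ I), Ideal.Quotient.algebraMap_eq,
        MvPolynomial.algebraMap_eq, ← map_pow, ← map_mul,
        Ideal.Quotient.mk_eq_mk_iff_sub_mem]
      have := I.neg_mem hg2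
      simpa using this
    · show χ (Ideal.Quotient.mk J (ψ0 (X 1))) = Ideal.Quotient.mk I (X 1)
      rw [hψ0X1]
      show χ0 Polynomial.X = _
      simp [χ0]
  let e : (MvPolynomial (Fin 2) k ⧸ I) ≃ₐ[k] (Polynomial k ⧸ J) :=
    AlgEquiv.ofAlgHom ψ χ hψχ hχψ
  refine ⟨⟨e⟩, ?_⟩
  rw [e.toLinearEquiv.finrank_eq]
  have h4 : ((Polynomial.X : Polynomial k) ^ 4) ≠ 0 := pow_ne_zero _ Polynomial.X_ne_zero
  have hfr : Module.finrank k (AdjoinRoot ((Polynomial.X : Polynomial k) ^ 4)) = 4 := by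
    rw [(AdjoinRoot.powerBasis h4).finrank]
    simp [AdjoinRoot.powerBasis]
  exact hfr
end
end
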